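/- There exists a constant c < 1 such that ‖P^B_r f‖_{L²(μ_r)} ≤ c·‖f‖_{L²(μ_r)} for every f ∈ L²(X, μ_r); that is, the operator norm of P^B_r on L²(X, μ_r) is strictly less than 1. -/

import Mathlib

/- STATEMENT 16: In the setting of a compact connected metric space with more than one
   point, μ a Borel measure of full support, r > 0, and a closed ball B = B_R[x₀] with
   non-empty complement: there is a constant c < 1 with
   ‖P^B_r f‖_{L²(μ_r)} ≤ c·‖f‖_{L²(μ_r)} for every f ∈ L²(μ_r); i.e. the operator norm
   of P^B_r on L²(μ_r) is strictly less than 1. -/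

open MeasureTheory Metric
open scoped ENNReal

section ChainAux
variable {X : Type*} [MetricSpace X] {r : ℝ} {z : X}

/-- A chain from `x` to `z` of length `m`: first step `< r/4`, later steps `< r/8`. -/
def ChainTo (r : ℝ) (z : X) (m : ℕ) (x : X) : Prop :=
  ∃ u : ℕ → X, u 0 = x ∧ u m = z ∧ ∀ i < m, dist (u i) (u (i + 1)) < if i = 0 then r / 4 else r / 8

/-- Chains with all steps `< r/8`. -/
def TightChainTo (r : ℝ) (z : X) (x : X) : Prop :=
  ∃ m, ∃ u : ℕ → X, u 0 = x ∧ u m = z ∧ ∀ i < m, dist (u i) (u (i + 1)) < r / 8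

lemma tightChainTo_self : TightChainTo r z z :=
  ⟨0, fun _ => z, rfl, rfl, by intro i hi; omega⟩

lemma TightChainTo.cons {x y : X} (hd : dist y x < r / 8) (h : TightChainTo r z x) :
    TightChainTo r z y := by
  obtain ⟨m, u, hu0, hum, hstep⟩ := h
  refine ⟨m + 1, fun i => Nat.casesOn i y u, rfl, hum, ?_⟩
  intro i hi
  cases i with
  | zero => simpa [hu0] using hd
  | succ j => exact hstep j (by omega)

lemma tightChainTo_total [ConnectedSpace X] (hr : 0 < r) (z : X) (x : X) :
    TightChainTo r z x := by
  have h8 : 0 < r / 8 := by linarith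
  set C : Set X := {x | TightChainTo r z x} with hC
  have hopen : IsOpen C := by
    rw [Metric.isOpen_iff]
    intro x hx
    exact ⟨r / 8, h8, fun y hy => TightChainTo.cons (by simpa [dist_comm] using hy) hx⟩
  have hclosed : IsClosed C := by
    rw [← isOpen_compl_iff, Metric.isOpen_iff]
    intro x hx
    refine ⟨r / 8, h8, fun y hy hyC => hx ?_⟩
    exact TightChainTo.cons (by simpa [dist_comm] using hy) hyC
  have : C = Set.univ := IsClopen.eq_univ ⟨hclosed, hopen⟩ ⟨z, tightChainTo_self⟩
  exact (Set.eq_univ_iff_forall.1 this) x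

lemma TightChainTo.chainTo (hr : 0 < r) {x : X} (h : TightChainTo r z x) :
    ∃ m, ChainTo r z m x := by
  obtain ⟨m, u, hu0, hum, hstep⟩ := h
  refine ⟨m, u, hu0, hum, fun i hi => lt_of_lt_of_le (hstep i hi) ?_⟩
  split <;> linarith

lemma ChainTo.succ (hr : 0 < r) {m : ℕ} {x : X} (h : ChainTo r z m x) :
    ChainTo r z (m + 1) x := by
  obtain ⟨u, hu0, hum, hstep⟩ := h
  refine ⟨fun i => if i ≤ m then u i else z, by simp [hu0], by simp, ?_⟩
  intro i hi
  rcases lt_or_eq_of_le (Nat.lt_succ_iff.1 hi) with h' | h'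
  · have h1 : i ≤ m := h'.le
    have h2 : i + 1 ≤ m := h'
    simpa [h1, h2] using hstep i h'
  · subst h'
    have : ¬ (i + 1 ≤ i) := by omega
    simp only [le_refl, if_true, this, if_false, hum, dist_self]
    split <;> linarith

lemma ChainTo.mono (hr : 0 < r) {m m' : ℕ} {x : X} (hm : m ≤ m') (h : ChainTo r z m x) :
    ChainTo r z m' x := by
  induction hm with
  | refl => exact h
  | step _ ih => exact (ih).succ hr
  

lemma isOpen_chainTo {m : ℕ} (hm : 1 ≤ m) : IsOpen {x : X | ChainTo r z m x} := by
  rw [Metric.isOpen_iff]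
  rintro x ⟨u, hu0, hum, hstep⟩
  have h0 : dist (u 0) (u 1) < r / 4 := by simpa using hstep 0 hm
  refine ⟨r / 4 - dist (u 0) (u 1), by linarith, fun y hy => ?_⟩
  rw [mem_ball] at hy
  refine ⟨fun i => if i = 0 then y else u i, by simp, ?_, ?_⟩
  · have : m ≠ 0 := by omega
    simp [this, hum]
  · intro i hi
    cases i with
    | zero =>
      simp only [if_true, one_ne_zero, if_false, reduceIte]
      calc dist y (u 1) ≤ dist y x + dist x (u 1) := dist_triangle _ _ _
        _ < (r / 4 - dist (u 0) (u 1)) + dist (u 0) (u 1) := by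
            rw [hu0] at hy ⊢; exact add_lt_add_of_lt_of_le hy le_rfl
        _ ≤ r / 4 := by linarith
    | succ j =>
      have h1 : (j + 1 : ℕ) ≠ 0 := by omega
      have h2 : (j + 2 : ℕ) ≠ 0 := by omega
      simpa [h1, h2] using hstep (j + 1) hi

lemma chainTo_bound [CompactSpace X] [ConnectedSpace X] (hr : 0 < r) (z : X) :
    ∃ N : ℕ, 1 ≤ N ∧ ∀ x : X, ChainTo r z N x := by
  have hcover : Set.univ ⊆ ⋃ m : ℕ, {x : X | ChainTo r z (m + 1) x} := by
    intro x _
    obtain ⟨m, hm⟩ := (tightChainTo_total hr z x).chainTo hr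
    exact Set.mem_iUnion.2 ⟨m, hm.succ hr⟩
  obtain ⟨s, hs⟩ := isCompact_univ.elim_finite_subcover _
    (fun m : ℕ => isOpen_chainTo (by omega)) hcover
  refine ⟨s.sup id + 1, by omega, fun x => ?_⟩
  obtain ⟨m, hms, hm⟩ := Set.mem_iUnion₂.1 (hs (Set.mem_univ x))
  have hle := Finset.le_sup (f := id) hms
  exact hm.mono hr (by simp only [id] at hle; omega)

lemma chainTo_zero_iff {x : X} : ChainTo r z 0 x ↔ x = z := by
  constructor
  · rintro ⟨u, hu0, hum, -⟩; rw [← hu0, hum]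
  · intro h; subst h; exact ⟨fun _ => x, rfl, rfl, by omega⟩

lemma ChainTo.escape {x : X} (h : ChainTo r z 1 x) : dist x z < r / 4 := by
  obtain ⟨u, hu0, hum, hstep⟩ := h
  simpa [hu0, hum] using hstep 0 (by omega)

lemma ChainTo.chunk (hr : 0 < r) {m : ℕ} {x : X} (hm : 2 ≤ m) (h : ChainTo r z m x) :
    ∃ x₂ : X, dist x x₂ < r / 2 ∧ ∀ y ∈ ball x₂ (r / 8), ChainTo r z (m - 1) y := by
  obtain ⟨u, hu0, hum, hstep⟩ := h
  have h0 : dist (u 0) (u 1) < r / 4 := by simpa using hstep 0 (by omega)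
  have h1 : dist (u 1) (u 2) < r / 8 := by simpa using hstep 1 (by omega)
  refine ⟨u 2, ?_, ?_⟩
  · calc dist x (u 2) ≤ dist (u 0) (u 1) + dist (u 1) (u 2) := by
          rw [← hu0]; exact dist_triangle _ _ _
      _ < r / 2 := by linarith
  · intro y hy
    rw [mem_ball] at hy
    refine ⟨fun i => if i = 0 then y else u (i + 1), by simp, ?_, ?_⟩
    · have h2 : m - 1 ≠ 0 := by omega
      have h3 : m - 1 + 1 = m := by omega
      simp [h2, h3, hum]
    · intro i hi
      cases i with
      | zero =>
        simpa using lt_of_lt_of_le hy (by linarith)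
      | succ j =>
        have h1' : (j + 1 : ℕ) ≠ 0 := by omega
        have h2' : (j + 2 : ℕ) ≠ 0 := by omega
        have := hstep (j + 2) (by omega)
        simp only [Nat.add_eq, h1', h2', if_false] at this ⊢
        simpa using this
end ChainAux

lemma exists_schur {X : Type*} [MetricSpace X] [CompactSpace X] [ConnectedSpace X]
    [Nontrivial X] [MeasurableSpace X] [BorelSpace X]
    (μ : Measure X) [μ.IsOpenPosMeasure] [IsFiniteMeasure μ]
    (r : ℝ) (hr : 0 < r) (x₀ : X) (R : ℝ)
    (hBc : ((closedBall x₀ R)ᶜ).Nonempty) :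
    ∃ (h : X → ℝ≥0∞) (κ ε : ℝ), Measurable h ∧ 0 < ε ∧
      (∀ x, ENNReal.ofReal ε ≤ h x) ∧ (∀ x, h x ≤ 1) ∧ 0 ≤ κ ∧ κ < 1 ∧
      ∀ x ∈ closedBall x₀ R, ∫⁻ y in ball x r ∩ closedBall x₀ R, h y ∂μ ≤
        ENNReal.ofReal κ * (h x * μ (ball x r)) := by
  set B := closedBall x₀ R with hBdef
  obtain ⟨z, hz⟩ := hBc
  have hBm : MeasurableSet B := measurableSet_closedBall
  have hBo : IsOpen Bᶜ := (isClosed_closedBall).isOpen_compl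
  obtain ⟨ρ₀, hρ₀, hballz⟩ := Metric.isOpen_iff.1 hBo z hz
  set ρ := min ρ₀ (r / 8) with hρdef
  have hρ : 0 < ρ := lt_min hρ₀ (by linarith)
  have hρr : ρ ≤ r / 8 := min_le_right _ _
  have hzB : ball z ρ ⊆ Bᶜ := by
    intro y hy
    apply hballz
    rw [mem_ball] at hy ⊢
    exact lt_of_lt_of_le hy (min_le_left _ _)
  -- uniform lower bound on measures of r/8-balls
  have hc : (Set.univ : Set X) ⊆ ⋃ c : X, ball c (r / 16) := fun y _ =>
    Set.mem_iUnion.2 ⟨y, mem_ball_self (by linarith)⟩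
  obtain ⟨s, hs⟩ := isCompact_univ.elim_finite_subcover (fun c : X => ball c (r / 16))
    (fun _ => isOpen_ball) hc
  have hsne : s.Nonempty := by
    obtain ⟨c, hcs, -⟩ := Set.mem_iUnion₂.1 (hs (Set.mem_univ x₀))
    exact ⟨c, hcs⟩
  set α := s.inf' hsne (fun c => (μ (ball c (r / 16))).toReal) with hαdef
  have hball_pos : ∀ (y : X) (ρ' : ℝ), 0 < ρ' → 0 < (μ (ball y ρ')).toReal := by
    intro y ρ' hρ'
    exact ENNReal.toReal_pos (isOpen_ball.measure_ne_zero μ (nonempty_ball.2 hρ')) (measure_ne_top _ _)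
  have hα_pos : 0 < α := by
    apply Finset.lt_inf'_iff (α := ℝ) hsne |>.2
    intro c _
    exact hball_pos c _ (by linarith)
  have hα : ∀ y : X, α ≤ (μ (ball y (r / 8))).toReal := by
    intro y
    obtain ⟨c, hcs, hyc⟩ := Set.mem_iUnion₂.1 (hs (Set.mem_univ y))
    have hsub : ball c (r / 16) ⊆ ball y (r / 8) := by
      intro p hp
      rw [mem_ball] at hp hyc ⊢
      have := dist_triangle p c y
      rw [dist_comm c y] at this
      linarith
    exact le_trans (Finset.inf'_le _ hcs)
      (ENNReal.toReal_mono (measure_ne_top _ _) (measure_mono hsub))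
  set Mr := (μ Set.univ).toReal with hMrdef
  have hMr : 0 < Mr :=
    ENNReal.toReal_pos (isOpen_univ.measure_ne_zero μ Set.univ_nonempty) (measure_ne_top _ _)
  have hαM : α ≤ Mr :=
    le_trans (hα x₀) (ENNReal.toReal_mono (measure_ne_top _ _) (measure_mono (Set.subset_univ _)))
  -- chain distance
  obtain ⟨N, hN1, hN⟩ := chainTo_bound hr z
  set n : X → ℕ := fun x => sInf {m | ChainTo r z m x} with hndef
  have hChn : ∀ x, ChainTo r z (n x) x := fun x => Nat.sInf_mem (⟨N, hN x⟩ : {m | ChainTo r z m x}.Nonempty)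
  have hn_le : ∀ {x : X} {m : ℕ}, ChainTo r z m x → n x ≤ m := fun h => Nat.sInf_le h
  have hnN : ∀ x, n x ≤ N := fun x => hn_le (hN x)
  have hn_pos : ∀ x ∈ B, 1 ≤ n x := by
    intro x hx
    rcases Nat.eq_zero_or_pos (n x) with h0 | h1
    · exfalso
      have := hChn x
      rw [h0] at this
      rw [chainTo_zero_iff.1 this] at hx
      exact hz hx
    · exact h1
  have hn_level : ∀ m : ℕ, {x : X | n x ≤ m} = {x : X | ChainTo r z m x} := by
    intro m
    ext x
    exact ⟨fun hh => (hChn x).mono hr hh, fun hh => hn_le hh⟩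
  have hn_meas : Measurable n := by
    apply measurable_to_countable'
    intro m
    have hle : ∀ k : ℕ, MeasurableSet {x : X | n x ≤ k} := by
      intro k
      rw [hn_level]
      cases k with
      | zero =>
        have : {x : X | ChainTo r z 0 x} = {z} := by
          ext x; simp [chainTo_zero_iff]
        rw [this]; exact measurableSet_singleton z
      | succ j => exact (isOpen_chainTo (by omega)).measurableSet
    have : n ⁻¹' {m} = {x : X | n x ≤ m} \ ⋃ k ∈ Finset.range m, {x : X | n x ≤ k} := by
      ext x
      simp only [Set.mem_preimage, Set.mem_singleton_iff, Set.mem_diff, Set.mem_setOf_eq,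
        Set.mem_iUnion, Finset.mem_range, not_exists]
      constructor
      · rintro rfl; exact ⟨le_rfl, fun k hk hle' => by omega⟩
      · rintro ⟨h1, h2⟩
        by_contra hne
        have hlt : n x < m := lt_of_le_of_ne h1 hne
        exact h2 (n x) hlt le_rfl
    rw [this]
    exact (hle m).diff (MeasurableSet.biUnion (Set.to_countable _) (fun k _ => hle k))
  -- parameters
  set l := α / (2 * Mr) with hldef
  have hl0 : 0 < l := by positivity
  have hl1 : l < 1 := by
    rw [hldef, div_lt_one (by positivity)]
    linarith
  have hlMr : l * Mr = α / 2 := by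
    rw [hldef]; field_simp
  set α₀ := (μ (ball z ρ)).toReal with hα₀def
  have hα₀ : 0 < α₀ := hball_pos z ρ hρ
  set t := min (1/2 : ℝ) (α₀ / (2 * l * Mr)) with htdef
  have ht0 : 0 < t := lt_min (by norm_num) (by positivity)
  have ht2 : t ≤ 1/2 := min_le_left _ _
  have htl : t * (l * Mr) ≤ α₀ / 2 := by
    have h1 : t ≤ α₀ / (2 * l * Mr) := min_le_right _ _
    have h2 : (0:ℝ) < l * Mr := by positivity
    calc t * (l * Mr) ≤ (α₀ / (2 * l * Mr)) * (l * Mr) := by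
          exact mul_le_mul_of_nonneg_right h1 h2.le
      _ = α₀ / 2 := by field_simp
  set s₀ := min (t * l ^ N * α / (2 * Mr)) (min (α₀ / (2 * Mr)) (1/2)) with hs₀def
  have hs₀ : 0 < s₀ := by
    apply lt_min (by positivity) (lt_min (by positivity) (by norm_num))
  have hs₀2 : s₀ ≤ 1/2 := le_trans (min_le_right _ _) (min_le_right _ _)
  have hs₀Mr1 : s₀ * Mr ≤ t * l ^ N * α / 2 := by
    calc s₀ * Mr ≤ (t * l ^ N * α / (2 * Mr)) * Mr :=
          mul_le_mul_of_nonneg_right (min_le_left _ _) hMr.le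
      _ = t * l ^ N * α / 2 := by field_simp
  have hs₀Mr2 : s₀ * Mr ≤ α₀ / 2 := by
    calc s₀ * Mr ≤ (α₀ / (2 * Mr)) * Mr :=
          mul_le_mul_of_nonneg_right (le_trans (min_le_right _ _) (min_le_left _ _)) hMr.le
      _ = α₀ / 2 := by field_simp
  set κ := 1 - s₀ with hκdef
  set h : X → ℝ≥0∞ := fun x => ENNReal.ofReal (1 - t * l ^ (n x)) with hhdef
  have hpow_le_one : ∀ k : ℕ, l ^ k ≤ 1 := fun k => pow_le_one₀ hl0.le hl1.le
  have hpow_nonneg : ∀ k : ℕ, (0:ℝ) ≤ l ^ k := fun k => by positivity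
  have hh_lb_real : ∀ x, 1 - t ≤ 1 - t * l ^ (n x) := by
    intro x
    have : t * l ^ (n x) ≤ t * 1 := mul_le_mul_of_nonneg_left (hpow_le_one _) ht0.le
    linarith
  have hh_ub_real : ∀ k : ℕ, 1 - t * l ^ k ≤ 1 := by
    intro k
    have : 0 ≤ t * l ^ k := by positivity
    linarith
  refine ⟨h, κ, 1 - t, ?_, by linarith, ?_, ?_, by linarith, by linarith, ?_⟩
  · exact ENNReal.measurable_ofReal.comp ((measurable_from_top (f := fun k : ℕ => 1 - t * l ^ k)).comp hn_meas)
  · intro x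
    exact ENNReal.ofReal_le_ofReal (hh_lb_real x)
  · intro x
    exact ENNReal.ofReal_le_one.2 (hh_ub_real _)
  -- main Schur estimate
  have hα₀le : ∀ s' : Set X, ball z ρ ⊆ s' → α₀ ≤ (μ s').toReal := fun s' hsub =>
    ENNReal.toReal_mono (measure_ne_top _ _) (measure_mono hsub)
  have hMr_ub : ∀ s' : Set X, (μ s').toReal ≤ Mr := fun s' =>
    ENNReal.toReal_mono (measure_ne_top _ _) (measure_mono (Set.subset_univ _))
  clear_value α Mr l α₀ t s₀ κ
  intro x hx
  set m := n x with hmdef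
  have hm1 : 1 ≤ m := hn_pos x hx
  have hmN : m ≤ N := hnN x
  set G := ball x r with hGdef
  set A := G ∩ B with hAdef
  have hAm : MeasurableSet A := isOpen_ball.measurableSet.inter hBm
  set wr := (μ G).toReal with hwrdef
  set a := (μ A).toReal with hadef
  set e := (μ (G \ B)).toReal with hedef
  have hae : a + e = wr := by
    have h1 := measure_inter_add_diff (μ := μ) G hBm
    have := congrArg ENNReal.toReal h1
    rwa [ENNReal.toReal_add (measure_ne_top _ _) (measure_ne_top _ _)] at this
  have hwM : wr ≤ Mr := hMr_ub G
  have hwr0 : 0 ≤ wr := ENNReal.toReal_nonneg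
  have he0 : 0 ≤ e := ENNReal.toReal_nonneg
  have ha0 : 0 ≤ a := ENNReal.toReal_nonneg
  have hhm0 : 0 ≤ 1 - t * l ^ m := by
    have := hh_lb_real x; rw [← hmdef] at this; linarith
  -- rewrite the RHS
  have hRHS : ENNReal.ofReal κ * (h x * μ G) = ENNReal.ofReal (κ * ((1 - t * l ^ m) * wr)) := by
    rw [hhdef]
    simp only [← hmdef]
    rw [← ENNReal.ofReal_toReal (measure_ne_top μ G), ← hwrdef,
      ← ENNReal.ofReal_mul hhm0, ← ENNReal.ofReal_mul (by linarith)]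
  rw [hRHS]
  rcases eq_or_lt_of_le hm1 with hm1' | hm2
  · -- case m = 1 : escape through ball z ρ
    have hdz : dist x z < r / 4 := by
      have := hChn x
      rw [← hmdef, ← hm1'] at this
      exact this.escape
    have hzsub : ball z ρ ⊆ G \ B := by
      intro y hy
      rw [mem_ball] at hy
      constructor
      · rw [hGdef, mem_ball]
        have := dist_triangle y z x
        rw [dist_comm z x] at this
        linarith
      · exact hzB hy
    have heα₀ : α₀ ≤ e := hα₀le _ hzsub
    have hle : ∫⁻ y in A, h y ∂μ ≤ ENNReal.ofReal a := by
      calc ∫⁻ y in A, h y ∂μ ≤ ∫⁻ _ in A, 1 ∂μ :=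
            lintegral_mono (fun y => ENNReal.ofReal_le_one.2 (hh_ub_real _))
        _ = μ A := by rw [setLIntegral_const, one_mul]
        _ = ENNReal.ofReal a := (ENNReal.ofReal_toReal (measure_ne_top _ _)).symm
    refine le_trans hle (ENNReal.ofReal_le_ofReal ?_)
    -- real inequality, m = 1
    rw [hκdef, ← hm1', pow_one]
    have e1 : s₀ * wr ≤ s₀ * Mr := mul_le_mul_of_nonneg_left hwM hs₀.le
    have e2 : t * l * wr ≤ t * l * Mr := mul_le_mul_of_nonneg_left hwM (by positivity)
    have e3 : (0:ℝ) ≤ s₀ * (t * l * wr) := by positivity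
    have e4 : t * l * Mr = t * (l * Mr) := by ring
    linarith [htl, hs₀Mr2, e1, e2, e3, e4, heα₀, hae]
  · -- case 2 ≤ m : chunk with smaller chain value
    have hm2' : 2 ≤ m := hm2
    obtain ⟨x₂, hx₂d, hx₂⟩ := (hChn x).chunk hr hm2'
    set S := ball x₂ (r / 8) with hSdef
    have hSm : MeasurableSet S := isOpen_ball.measurableSet
    have hSsub : S ⊆ G := by
      intro y hy
      rw [hSdef, mem_ball] at hy
      rw [hGdef, mem_ball]
      have := dist_triangle y x₂ x
      rw [dist_comm x₂ x] at this
      linarith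
    have hchunk_n : ∀ y ∈ S, n y ≤ m - 1 := fun y hy => hn_le (hx₂ y hy)
    set c₁ := 1 - t * l ^ (m - 1) with hc₁def
    have hc₁0 : 0 ≤ c₁ := by
      have : t * l ^ (m-1) ≤ t * 1 := mul_le_mul_of_nonneg_left (hpow_le_one _) ht0.le
      rw [hc₁def]; linarith
    have hsplit : ∫⁻ y in A, h y ∂μ ≤ ENNReal.ofReal c₁ * μ (A ∩ S) + μ (A \ S) := by
      have hdisj : Disjoint (A ∩ S) (A \ S) :=
        Set.disjoint_sdiff_right.mono_left Set.inter_subset_right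
      have hun : A ∩ S ∪ A \ S = A := Set.inter_union_diff A S
      have heq : ∫⁻ y in A, h y ∂μ
          = (∫⁻ y in A ∩ S, h y ∂μ) + ∫⁻ y in A \ S, h y ∂μ := by
        conv_lhs => rw [← hun]
        exact lintegral_union (hAm.diff hSm) hdisj
      rw [heq]
      apply add_le_add
      · calc ∫⁻ y in A ∩ S, h y ∂μ ≤ ∫⁻ _ in A ∩ S, ENNReal.ofReal c₁ ∂μ := by
              apply setLIntegral_mono measurable_const
              intro y hy
              apply ENNReal.ofReal_le_ofReal
              have hny : n y ≤ m - 1 := hchunk_n y hy.2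
              have : l ^ (m - 1) ≤ l ^ (n y) := pow_le_pow_of_le_one hl0.le hl1.le hny
              have := mul_le_mul_of_nonneg_left this ht0.le
              rw [hc₁def]; linarith
          _ = ENNReal.ofReal c₁ * μ (A ∩ S) := by rw [setLIntegral_const]
      · calc ∫⁻ y in A \ S, h y ∂μ ≤ ∫⁻ _ in A \ S, 1 ∂μ :=
              lintegral_mono (fun y => ENNReal.ofReal_le_one.2 (hh_ub_real _))
          _ = μ (A \ S) := by rw [setLIntegral_const, one_mul]
    set p := (μ (A ∩ S)).toReal with hpdef
    set q := (μ (A \ S)).toReal with hqdef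
    have hp0 : 0 ≤ p := ENNReal.toReal_nonneg
    have hq0 : 0 ≤ q := ENNReal.toReal_nonneg
    have hpq : p + q = a := by
      have h1 := measure_inter_add_diff (μ := μ) A hSm
      have := congrArg ENNReal.toReal h1
      rwa [ENNReal.toReal_add (measure_ne_top _ _) (measure_ne_top _ _)] at this
    have hαpe : α ≤ p + e := by
      have hsub : S ⊆ (A ∩ S) ∪ (G \ B) := by
        intro y hy
        by_cases hyB : y ∈ B
        · exact Or.inl ⟨⟨hSsub hy, hyB⟩, hy⟩
        · exact Or.inr ⟨hSsub hy, hyB⟩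
      have h1 : μ S ≤ μ (A ∩ S) + μ (G \ B) :=
        le_trans (measure_mono hsub) (measure_union_le _ _)
      have h2 : (μ S).toReal ≤ p + e := by
        have := ENNReal.toReal_mono (by
          exact ENNReal.add_ne_top.2 ⟨measure_ne_top _ _, measure_ne_top _ _⟩) h1
        rwa [ENNReal.toReal_add (measure_ne_top _ _) (measure_ne_top _ _)] at this
      exact le_trans (hα x₂) h2
    refine le_trans hsplit ?_
    have hcollect : ENNReal.ofReal c₁ * μ (A ∩ S) + μ (A \ S)
        = ENNReal.ofReal (c₁ * p + q) := by
      rw [← ENNReal.ofReal_toReal (measure_ne_top μ (A ∩ S)),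
        ← ENNReal.ofReal_toReal (measure_ne_top μ (A \ S)), ← hpdef, ← hqdef,
        ← ENNReal.ofReal_mul hc₁0, ← ENNReal.ofReal_add (by positivity) hq0]
    rw [hcollect]
    apply ENNReal.ofReal_le_ofReal
    -- real inequality, m ≥ 2
    set b := l ^ (m - 1) with hbdef
    have hb0 : 0 < b := by positivity
    have hb1 : b ≤ 1 := hpow_le_one _
    have hlm : l ^ m = b * l := by
      rw [hbdef, ← pow_succ]
      congr 1
      omega
    have hlN : l ^ N ≤ b := pow_le_pow_of_le_one hl0.le hl1.le (by omega)
    have htb1 : t * b ≤ 1 := by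
      have h1 : t * b ≤ t * 1 := mul_le_mul_of_nonneg_left hb1 ht0.le
      rw [mul_one] at h1; linarith
    have key1 : t * b * α ≤ t * b * p + t * b * e := by
      have h1 := mul_le_mul_of_nonneg_left hαpe (by positivity : (0:ℝ) ≤ t * b)
      rw [mul_add] at h1; exact h1
    have key2 : s₀ * Mr ≤ t * b * α / 2 := by
      have h1 : t * l ^ N ≤ t * b := mul_le_mul_of_nonneg_left hlN ht0.le
      have h2 : t * l ^ N * α ≤ t * b * α := mul_le_mul_of_nonneg_right h1 hα_pos.le
      linarith
    have key3 : t * (b * l) * Mr = t * b * α / 2 := by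
      calc t * (b * l) * Mr = t * b * (l * Mr) := by ring
        _ = t * b * (α / 2) := by rw [hlMr]
        _ = t * b * α / 2 := by ring
    have e1 : s₀ * wr ≤ s₀ * Mr := mul_le_mul_of_nonneg_left hwM hs₀.le
    have e2 : t * (b * l) * wr ≤ t * (b * l) * Mr :=
      mul_le_mul_of_nonneg_left hwM (by positivity)
    have e3 : (0:ℝ) ≤ s₀ * (t * (b * l) * wr) := by positivity
    have e4 : t * b * e ≤ e := by
      have h1 : e * (t * b) ≤ e * 1 := mul_le_mul_of_nonneg_left htb1 he0
      rw [mul_one] at h1; linarith [h1]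
    rw [hκdef, hc₁def, hlm]
    linarith [key1, key2, key3, e1, e2, e3, e4, hpq, hae]

lemma measurable_measure_ball' {X : Type*} [MetricSpace X] [MeasurableSpace X]
    [OpensMeasurableSpace X] (μ : Measure X) (r : ℝ) (hr : 0 < r) :
    Measurable (fun x => μ (ball x r)) := by
  apply LowerSemicontinuous.measurable
  intro x c hc
  have hU : ball x r = ⋃ n : ℕ, ball x (r - r / (n + 2)) := by
    ext y
    simp only [mem_ball, Set.mem_iUnion]
    constructor
    · intro hy
      have hpos : 0 < r - dist y x := by linarith
      obtain ⟨n, hn⟩ := exists_nat_gt (r / (r - dist y x))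
      refine ⟨n, ?_⟩
      have hn2 : r / (r - dist y x) < (n:ℝ) + 2 := by linarith
      have := (div_lt_iff₀ hpos).1 hn2
      have hrn : r / ((n:ℝ) + 2) < r - dist y x := by
        rw [div_lt_iff₀ (by positivity)]
        linarith [this]
      linarith
    · rintro ⟨n, hn⟩
      have : 0 ≤ r / ((n:ℝ) + 2) := by positivity
      linarith
  have hdir : Directed (· ⊆ ·) (fun n : ℕ => ball x (r - r / (n + 2))) := by
    apply Monotone.directed_le
    intro i j hij
    apply ball_subset_ball
    have : r / ((j:ℝ) + 2) ≤ r / ((i:ℝ) + 2) := by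
      apply div_le_div_of_nonneg_left hr.le (by positivity)
      exact_mod_cast by omega
    linarith
  have hc' : c < μ (ball x r) := hc
  rw [hU, Directed.measure_iUnion hdir] at hc'
  obtain ⟨n, hn⟩ := lt_iSup_iff.1 hc'
  have hδ : 0 < r / ((n:ℝ) + 2) := by positivity
  filter_upwards [Metric.ball_mem_nhds x hδ] with y hy
  refine lt_of_lt_of_le hn (measure_mono ?_)
  intro p hp
  rw [mem_ball] at hp hy ⊢
  have := dist_triangle p x y
  rw [dist_comm x y] at this
  linarith

/-- The killed Markov operator `P^B_r f(x) = 1_B(x)·(1/μ(B_r(x)))·∫_{B_r(x)∩B} f dμ`. -/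
noncomputable def killedOp {X : Type*} [MetricSpace X] [MeasurableSpace X]
    (μ : Measure X) (r : ℝ) (B : Set X) (f : X → ℝ) : X → ℝ :=
  B.indicator fun x => (μ (Metric.ball x r)).toReal⁻¹ * ∫ y in Metric.ball x r ∩ B, f y ∂μ

/-- The measure `μ_r` with density `x ↦ μ(B_r(x))` with respect to `μ`. -/
noncomputable def muR {X : Type*} [MetricSpace X] [MeasurableSpace X]
    (μ : Measure X) (r : ℝ) : Measure X :=
  μ.withDensity fun x => μ (Metric.ball x r)

theorem statement16 {X : Type*} [MetricSpace X] [CompactSpace X] [ConnectedSpace X]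
    [Nontrivial X] [MeasurableSpace X] [BorelSpace X]
    (μ : Measure X) [μ.IsOpenPosMeasure] [IsFiniteMeasure μ]
    (r : ℝ) (hr : 0 < r) (x₀ : X) (R : ℝ)
    (hBc : ((Metric.closedBall x₀ R)ᶜ).Nonempty) :
    ∃ c : ℝ≥0∞, c < 1 ∧ ∀ f : X → ℝ,
      eLpNorm (killedOp μ r (Metric.closedBall x₀ R) f) 2 (muR μ r) ≤
        c * eLpNorm f 2 (muR μ r) := by
  classical
  set B := closedBall x₀ R with hBdef
  have hBm : MeasurableSet B := measurableSet_closedBall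
  obtain ⟨h, κ, ε, hh_meas, hε, hh_lb, hh_ub, hκ0, hκ1, hschur⟩ := exists_schur μ r hr x₀ R hBc
  set w : X → ℝ≥0∞ := fun x => μ (ball x r) with hwdef
  have hw_meas : Measurable w := measurable_measure_ball' μ r hr
  have hw_pos : ∀ x, w x ≠ 0 := fun x =>
    (isOpen_ball.measure_pos μ (nonempty_ball.2 hr)).ne'
  have hw_ne_top : ∀ x, w x ≠ ∞ := fun x => measure_ne_top μ _
  have hν : ∀ g : X → ℝ≥0∞, ∫⁻ y, g y ∂(muR μ r) = ∫⁻ y, w y * g y ∂μ := by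
    intro g
    rw [muR, lintegral_withDensity_eq_lintegral_mul_non_measurable μ hw_meas
      (ae_of_all μ fun x => measure_lt_top μ _) g]
    simp only [Pi.mul_apply]
  set κ' := ENNReal.ofReal κ with hκ'def
  have hκ'top : κ' ≠ ∞ := ENNReal.ofReal_ne_top
  have hh_ne_top : ∀ y, h y ≠ ∞ := fun y => (lt_of_le_of_lt (hh_ub y) (by norm_num)).ne
  have hh_ne_zero : ∀ y, h y ≠ 0 := fun y =>
    (lt_of_lt_of_le (by simp [ENNReal.ofReal_pos.2 hε]) (hh_lb y)).ne'
  have hsq : ∀ v : ℝ≥0∞, v ^ (2:ℝ) = v * v := fun v => by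
    rw [show (2:ℝ) = ((2:ℕ):ℝ) by norm_num, ENNReal.rpow_natCast, pow_two]
  refine ⟨κ', ENNReal.ofReal_lt_one.2 hκ1, ?_⟩
  intro f
  set P := killedOp μ r B f with hPdef
  -- measurable replacement for f on the relevant region
  set D := {x : X | IntegrableOn f (ball x r ∩ B) μ} with hDdef
  set O := ⋃ x ∈ D, ball x r with hOdef
  have hOopen : IsOpen O := isOpen_biUnion fun _ _ => isOpen_ball
  have hOB : MeasurableSet (O ∩ B) := hOopen.measurableSet.inter hBm
  have hfae : AEStronglyMeasurable f (μ.restrict (O ∩ B)) := by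
    obtain ⟨T, hTc, hTeq⟩ := TopologicalSpace.isOpen_iUnion_countable
      (fun d : D => ball (d : X) r) (fun _ => isOpen_ball)
    haveI := hTc.to_subtype
    have key : ∀ i : T, AEStronglyMeasurable f
        (μ.restrict (ball ((i : D) : X) r ∩ B)) := fun i =>
      ((i : D).2 : IntegrableOn f _ μ).aestronglyMeasurable
    have h1 : AEStronglyMeasurable f
        (μ.restrict (⋃ i : T, ball ((i : D) : X) r ∩ B)) :=
      AEStronglyMeasurable.iUnion key
    have h2 : O ∩ B = ⋃ i : T, ball ((i : D) : X) r ∩ B := by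
      rw [← Set.iUnion_inter]
      congr 1
      rw [hOdef]
      rw [← Set.iUnion_subtype (fun x => x ∈ D) (fun d => ball (d : X) r)]
      rw [← hTeq]
      exact (Set.iUnion_subtype (fun i => i ∈ T) (fun i => ball ((i : D) : X) r)).symm
    rwa [h2]
  set g := hfae.mk f with hgdef
  have hg_sm : StronglyMeasurable g := hfae.stronglyMeasurable_mk
  have hfg : f =ᵐ[μ.restrict (O ∩ B)] g := hfae.ae_eq_mk
  set g₀ := (O ∩ B).indicator g with hg₀def
  have hg₀_meas : Measurable g₀ := (hg_sm.measurable).indicator hOB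
  set u : X → ℝ≥0∞ := fun y => (‖g₀ y‖₊ : ℝ≥0∞) with hudef
  have hu_meas : Measurable u := hg₀_meas.enorm
  -- pointwise bound on P
  have hP1 : ∀ x ∈ B, (‖P x‖₊ : ℝ≥0∞) ≤ (w x)⁻¹ * ∫⁻ y in ball x r ∩ B, u y ∂μ := by
    intro x hxB
    rw [hPdef, killedOp, Set.indicator_of_mem hxB]
    by_cases hxD : IntegrableOn f (ball x r ∩ B) μ
    · have hxO : ball x r ⊆ O := by
        rw [hOdef]
        exact Set.subset_biUnion_of_mem (u := fun y => ball y r) (show x ∈ D from hxD)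
      have hsub : ball x r ∩ B ⊆ O ∩ B := Set.inter_subset_inter_left _ hxO
      have hfg' : f =ᵐ[μ.restrict (ball x r ∩ B)] g :=
        ae_restrict_of_ae_restrict_of_subset hsub hfg
      have hint : ∫ y in ball x r ∩ B, f y ∂μ = ∫ y in ball x r ∩ B, g₀ y ∂μ := by
        rw [integral_congr_ae hfg']
        apply setIntegral_congr_fun (isOpen_ball.measurableSet.inter hBm)
        intro y hy
        exact (Set.indicator_of_mem (hsub hy) g).symm
      rw [hint]
      have hc : (‖(μ (ball x r)).toReal⁻¹‖₊ : ℝ≥0∞) = (w x)⁻¹ := by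
        rw [← enorm_eq_nnnorm, Real.enorm_eq_ofReal (by positivity),
          ENNReal.ofReal_inv_of_pos (ENNReal.toReal_pos (hw_pos x) (hw_ne_top x)),
          ENNReal.ofReal_toReal (hw_ne_top x)]
      calc (‖(μ (ball x r)).toReal⁻¹ * ∫ y in ball x r ∩ B, g₀ y ∂μ‖₊ : ℝ≥0∞)
          = (‖(μ (ball x r)).toReal⁻¹‖₊ : ℝ≥0∞) * (‖∫ y in ball x r ∩ B, g₀ y ∂μ‖₊ : ℝ≥0∞) := by
            rw [nnnorm_mul, ENNReal.coe_mul]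
        _ ≤ (w x)⁻¹ * ∫⁻ y in ball x r ∩ B, u y ∂μ := by
            rw [hc]
            exact mul_le_mul_right (enorm_integral_le_lintegral_enorm _) _
    · rw [integral_undef hxD]
      simp
  have hP0 : ∀ x ∉ B, P x = 0 := fun x hx => Set.indicator_of_notMem hx _
  -- inner Cauchy–Schwarz
  set I : X → ℝ≥0∞ := fun x => ∫⁻ y in ball x r ∩ B, u y ^ (2:ℝ) * (h y)⁻¹ ∂μ with hIdef
  have hCS : ∀ x ∈ B,
      (∫⁻ y in ball x r ∩ B, u y ∂μ) ^ (2:ℝ) ≤ (∫⁻ y in ball x r ∩ B, h y ∂μ) * I x := by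
    intro x _
    have hconj : Real.HolderConjugate 2 2 := Real.holderConjugate_iff.2 ⟨one_lt_two, by norm_num⟩
    set F1 : X → ℝ≥0∞ := fun y => (h y) ^ (2⁻¹:ℝ) with hF1
    set F2 : X → ℝ≥0∞ := fun y => u y * ((h y) ^ (2⁻¹:ℝ))⁻¹ with hF2
    have hF1m : Measurable F1 := hh_meas.pow measurable_const
    have hF2m : Measurable F2 := hu_meas.mul (hF1m.inv)
    have hprod : ∀ y, F1 y * F2 y = u y := by
      intro y
      have h1 : F1 y ≠ 0 := by
        simp only [hF1]
        exact (ENNReal.rpow_pos (lt_of_le_of_ne zero_le (Ne.symm (hh_ne_zero y)))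
          (hh_ne_top y)).ne'
      have h2 : F1 y ≠ ∞ :=
        ENNReal.rpow_ne_top_of_nonneg (by norm_num) (hh_ne_top y)
      calc F1 y * F2 y = u y * (F1 y * (F1 y)⁻¹) := by rw [hF2]; ring
        _ = u y := by rw [ENNReal.mul_inv_cancel h1 h2, mul_one]
    have hH := ENNReal.lintegral_mul_le_Lp_mul_Lq (μ.restrict (ball x r ∩ B)) hconj
      hF1m.aemeasurable hF2m.aemeasurable
    have hF1sq : ∀ y, F1 y ^ (2:ℝ) = h y := by
      intro y
      rw [hF1, ← ENNReal.rpow_mul]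
      norm_num
    have hF2sq : ∀ y, F2 y ^ (2:ℝ) = u y ^ (2:ℝ) * (h y)⁻¹ := by
      intro y
      rw [hF2, ENNReal.mul_rpow_of_nonneg _ _ (by norm_num : (0:ℝ) ≤ 2),
        ← ENNReal.inv_rpow, ← ENNReal.rpow_mul]
      norm_num
    have heq : ∀ y, u y = (F1 * F2) y := fun y => (hprod y).symm
    have hH' : (∫⁻ y in ball x r ∩ B, u y ∂μ)
        ≤ (∫⁻ y in ball x r ∩ B, h y ∂μ) ^ (1/2:ℝ) * (I x) ^ (1/2:ℝ) := by
      calc ∫⁻ y in ball x r ∩ B, u y ∂μ = ∫⁻ y in ball x r ∩ B, (F1 * F2) y ∂μ :=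
            lintegral_congr heq
        _ ≤ (∫⁻ y in ball x r ∩ B, F1 y ^ (2:ℝ) ∂μ) ^ (1/2:ℝ) *
            (∫⁻ y in ball x r ∩ B, F2 y ^ (2:ℝ) ∂μ) ^ (1/2:ℝ) := hH
        _ = (∫⁻ y in ball x r ∩ B, h y ∂μ) ^ (1/2:ℝ) * (I x) ^ (1/2:ℝ) := by
            rw [lintegral_congr hF1sq, hIdef]
            congr 1
            rw [lintegral_congr hF2sq]
    calc (∫⁻ y in ball x r ∩ B, u y ∂μ) ^ (2:ℝ)
        ≤ ((∫⁻ y in ball x r ∩ B, h y ∂μ) ^ (1/2:ℝ) * (I x) ^ (1/2:ℝ)) ^ (2:ℝ) :=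
          ENNReal.rpow_le_rpow hH' (by norm_num)
      _ = (∫⁻ y in ball x r ∩ B, h y ∂μ) * I x := by
          rw [ENNReal.mul_rpow_of_nonneg _ _ (by norm_num : (0:ℝ) ≤ 2),
            ← ENNReal.rpow_mul, ← ENNReal.rpow_mul]
          norm_num
  -- pointwise bound after weighting
  have hPtw : ∀ x, w x * (‖P x‖₊ : ℝ≥0∞) ^ (2:ℝ)
      ≤ B.indicator (fun x => κ' * (h x * I x)) x := by
    intro x
    by_cases hxB : x ∈ B
    · rw [Set.indicator_of_mem hxB]
      set J := ∫⁻ y in ball x r ∩ B, u y ∂μ with hJdef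
      have h1 : (‖P x‖₊ : ℝ≥0∞) ^ (2:ℝ) ≤ ((w x)⁻¹ * J) ^ (2:ℝ) :=
        ENNReal.rpow_le_rpow (hP1 x hxB) (by norm_num)
      have h2 : ((w x)⁻¹ * J) ^ (2:ℝ) = (w x)⁻¹ * (w x)⁻¹ * J ^ (2:ℝ) := by
        rw [ENNReal.mul_rpow_of_nonneg _ _ (by norm_num : (0:ℝ) ≤ 2), hsq ((w x)⁻¹)]
      have h3 : J ^ (2:ℝ) ≤ (κ' * (h x * w x)) * I x :=
        le_trans (hCS x hxB) (mul_le_mul_left (hschur x hxB) _)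
      have h4 : (‖P x‖₊ : ℝ≥0∞) ^ (2:ℝ)
          ≤ (w x)⁻¹ * (w x)⁻¹ * ((κ' * (h x * w x)) * I x) := by
        refine le_trans h1 ?_
        rw [h2]
        exact mul_le_mul_right h3 _
      calc w x * (‖P x‖₊ : ℝ≥0∞) ^ (2:ℝ)
          ≤ w x * ((w x)⁻¹ * (w x)⁻¹ * ((κ' * (h x * w x)) * I x)) := mul_le_mul_right h4 _
        _ = (w x * (w x)⁻¹) * (w x * (w x)⁻¹) * (κ' * (h x * I x)) := by ring
        _ = κ' * (h x * I x) := by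
            rw [ENNReal.mul_inv_cancel (hw_pos x) (hw_ne_top x), one_mul, one_mul]
    · rw [Set.indicator_of_notMem hxB, hP0 x hxB]
      simp [ENNReal.zero_rpow_of_pos]
  -- double integral kernel and swap
  have hC_ne_top : ∀ y, u y ^ (2:ℝ) * (h y)⁻¹ ≠ ∞ := by
    intro y
    apply ENNReal.mul_ne_top
    · exact ENNReal.rpow_ne_top_of_nonneg (by norm_num) ENNReal.coe_ne_top
    · exact ENNReal.inv_ne_top.2 (hh_ne_zero y)
  set Ψ : X → X → ℝ≥0∞ := fun x y =>
    B.indicator (fun x' => h x' *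
      (ball x' r ∩ B).indicator (fun y' => u y' ^ (2:ℝ) * (h y')⁻¹) y) x with hΨdef
  have step2 : ∀ x, B.indicator (fun x' => κ' * (h x' * I x')) x = κ' * ∫⁻ y, Ψ x y ∂μ := by
    intro x
    by_cases hxB : x ∈ B
    · rw [Set.indicator_of_mem hxB]
      congr 1
      simp only [hΨdef, Set.indicator_of_mem hxB]
      rw [lintegral_const_mul' (h x) _ (hh_ne_top x)]
      congr 1
      exact (lintegral_indicator (isOpen_ball.measurableSet.inter hBm) _).symm
    · rw [Set.indicator_of_notMem hxB]
      simp only [hΨdef, Set.indicator_of_notMem hxB]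
      simp
  have hΨm : Measurable (Function.uncurry Ψ) := by
    have hrw : Function.uncurry Ψ = fun p : X × X =>
        if p.1 ∈ B then h p.1 *
          (if dist p.2 p.1 < r ∧ p.2 ∈ B then u p.2 ^ (2:ℝ) * (h p.2)⁻¹ else 0) else 0 := by
      funext p
      simp only [Function.uncurry, hΨdef, Set.indicator_apply, Set.mem_inter_iff, mem_ball]
    rw [hrw]
    have hdistm : Measurable fun p : X × X => dist p.2 p.1 :=
      measurable_snd.dist measurable_fst
    have hs1 : MeasurableSet {p : X × X | p.1 ∈ B} := measurable_fst hBm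
    have hs2 : MeasurableSet {p : X × X | dist p.2 p.1 < r ∧ p.2 ∈ B} := by
      have h1 : MeasurableSet {p : X × X | dist p.2 p.1 < r} := hdistm measurableSet_Iio
      have h2 : MeasurableSet {p : X × X | p.2 ∈ B} := measurable_snd hBm
      exact h1.inter h2
    exact Measurable.ite hs1
      ((hh_meas.comp measurable_fst).mul
        (Measurable.ite hs2
          (((hu_meas.pow measurable_const).mul hh_meas.inv).comp measurable_snd)
          measurable_const))
      measurable_const
  have hswap : ∫⁻ x, ∫⁻ y, Ψ x y ∂μ ∂μ = ∫⁻ y, ∫⁻ x, Ψ x y ∂μ ∂μ :=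
    lintegral_lintegral_swap hΨm.aemeasurable
  have step5 : ∀ y, ∫⁻ x, Ψ x y ∂μ
      ≤ B.indicator (fun y' => κ' * (u y' ^ (2:ℝ) * w y')) y := by
    intro y
    by_cases hyB : y ∈ B
    · rw [Set.indicator_of_mem hyB]
      have hrw : ∀ x, Ψ x y
          = (ball y r ∩ B).indicator h x * (u y ^ (2:ℝ) * (h y)⁻¹) := by
        intro x
        by_cases hxB : x ∈ B
        · by_cases hd : dist y x < r
          · have hd' : dist x y < r := by rwa [dist_comm]
            simp [hΨdef, Set.indicator_apply, Set.mem_inter_iff, mem_ball, hxB, hd, hd', hyB]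
          · have hd' : ¬ dist x y < r := by rwa [dist_comm] at hd
            simp [hΨdef, Set.indicator_apply, Set.mem_inter_iff, mem_ball, hxB, hd, hd', hyB]
        · simp [hΨdef, Set.indicator_apply, Set.mem_inter_iff, mem_ball, hxB]
      calc ∫⁻ x, Ψ x y ∂μ
          = ∫⁻ x, (ball y r ∩ B).indicator h x * (u y ^ (2:ℝ) * (h y)⁻¹) ∂μ :=
            lintegral_congr hrw
        _ = (∫⁻ x, (ball y r ∩ B).indicator h x ∂μ) * (u y ^ (2:ℝ) * (h y)⁻¹) :=
            lintegral_mul_const' _ _ (hC_ne_top y)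
        _ = (∫⁻ x in ball y r ∩ B, h x ∂μ) * (u y ^ (2:ℝ) * (h y)⁻¹) := by
            rw [lintegral_indicator (isOpen_ball.measurableSet.inter hBm)]
        _ ≤ (κ' * (h y * w y)) * (u y ^ (2:ℝ) * (h y)⁻¹) :=
            mul_le_mul_left (hschur y hyB) _
        _ = (h y * (h y)⁻¹) * (κ' * (u y ^ (2:ℝ) * w y)) := by ring
        _ = κ' * (u y ^ (2:ℝ) * w y) := by
            rw [ENNReal.mul_inv_cancel (hh_ne_zero y) (hh_ne_top y), one_mul]
    · rw [Set.indicator_of_notMem hyB]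
      have hrw : ∀ x, Ψ x y = 0 := by
        intro x
        by_cases hxB : x ∈ B <;>
          simp [hΨdef, Set.indicator_apply, Set.mem_inter_iff, mem_ball, hxB, hyB]
      rw [lintegral_congr hrw, lintegral_zero]
  have hmain : ∫⁻ x, w x * (‖P x‖₊ : ℝ≥0∞) ^ (2:ℝ) ∂μ
      ≤ κ' * (κ' * ∫⁻ y, u y ^ (2:ℝ) * w y ∂μ) := by
    calc ∫⁻ x, w x * (‖P x‖₊ : ℝ≥0∞) ^ (2:ℝ) ∂μ
        ≤ ∫⁻ x, B.indicator (fun x' => κ' * (h x' * I x')) x ∂μ := lintegral_mono hPtw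
      _ = ∫⁻ x, κ' * ∫⁻ y, Ψ x y ∂μ ∂μ := lintegral_congr step2
      _ = κ' * ∫⁻ x, ∫⁻ y, Ψ x y ∂μ ∂μ := lintegral_const_mul' κ' _ hκ'top
      _ = κ' * ∫⁻ y, ∫⁻ x, Ψ x y ∂μ ∂μ := by rw [hswap]
      _ ≤ κ' * ∫⁻ y, B.indicator (fun y' => κ' * (u y' ^ (2:ℝ) * w y')) y ∂μ :=
          mul_le_mul_right (lintegral_mono step5) _
      _ ≤ κ' * ∫⁻ y, κ' * (u y ^ (2:ℝ) * w y) ∂μ :=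
          mul_le_mul_right (lintegral_mono fun y => Set.indicator_le_self _ _ y) _
      _ = κ' * (κ' * ∫⁻ y, u y ^ (2:ℝ) * w y ∂μ) := by
          rw [lintegral_const_mul' κ' _ hκ'top]
  have huf : ∫⁻ y, u y ^ (2:ℝ) * w y ∂μ
      ≤ ∫⁻ y, (‖f y‖₊ : ℝ≥0∞) ^ (2:ℝ) * w y ∂μ := by
    have hind : ∀ y, u y ^ (2:ℝ) * w y
        = (O ∩ B).indicator (fun y' => (‖g y'‖₊ : ℝ≥0∞) ^ (2:ℝ) * w y') y := by
      intro y
      by_cases hy : y ∈ O ∩ B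
      · simp [hudef, hg₀def, Set.indicator_of_mem hy]
      · simp [hudef, hg₀def, Set.indicator_of_notMem hy,
          ENNReal.zero_rpow_of_pos (by norm_num : (0:ℝ) < 2)]
    calc ∫⁻ y, u y ^ (2:ℝ) * w y ∂μ
        = ∫⁻ y in O ∩ B, (‖g y‖₊ : ℝ≥0∞) ^ (2:ℝ) * w y ∂μ := by
          rw [lintegral_congr hind, lintegral_indicator hOB]
      _ = ∫⁻ y in O ∩ B, (‖f y‖₊ : ℝ≥0∞) ^ (2:ℝ) * w y ∂μ := by
          apply lintegral_congr_ae
          filter_upwards [hfg] with y hy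
          rw [hy]
      _ ≤ ∫⁻ y, (‖f y‖₊ : ℝ≥0∞) ^ (2:ℝ) * w y ∂μ := setLIntegral_le_lintegral _ _
  have hkey : ∫⁻ x, (‖P x‖₊ : ℝ≥0∞) ^ (2:ℝ) ∂(muR μ r)
      ≤ κ' * κ' * ∫⁻ y, (‖f y‖₊ : ℝ≥0∞) ^ (2:ℝ) ∂(muR μ r) := by
    rw [hν, hν]
    calc ∫⁻ x, w x * (‖P x‖₊ : ℝ≥0∞) ^ (2:ℝ) ∂μ
        ≤ κ' * (κ' * ∫⁻ y, u y ^ (2:ℝ) * w y ∂μ) := hmain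
      _ ≤ κ' * (κ' * ∫⁻ y, (‖f y‖₊ : ℝ≥0∞) ^ (2:ℝ) * w y ∂μ) :=
          mul_le_mul_right (mul_le_mul_right huf _) _
      _ = κ' * κ' * ∫⁻ y, w y * (‖f y‖₊ : ℝ≥0∞) ^ (2:ℝ) ∂μ := by
          rw [lintegral_congr (fun y => mul_comm ((‖f y‖₊ : ℝ≥0∞) ^ (2:ℝ)) (w y)), mul_assoc]
  rw [eLpNorm_eq_lintegral_rpow_enorm_toReal (by norm_num) (by norm_num),
    eLpNorm_eq_lintegral_rpow_enorm_toReal (by norm_num) (by norm_num)]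
  simp only [ENNReal.toReal_ofNat]
  calc (∫⁻ x, (‖P x‖₊ : ℝ≥0∞) ^ (2:ℝ) ∂(muR μ r)) ^ (1/2:ℝ)
      ≤ (κ' * κ' * ∫⁻ y, (‖f y‖₊ : ℝ≥0∞) ^ (2:ℝ) ∂(muR μ r)) ^ (1/2:ℝ) :=
        ENNReal.rpow_le_rpow hkey (by norm_num)
    _ = (κ' * κ') ^ (1/2:ℝ) * (∫⁻ y, (‖f y‖₊ : ℝ≥0∞) ^ (2:ℝ) ∂(muR μ r)) ^ (1/2:ℝ) :=
        ENNReal.mul_rpow_of_nonneg _ _ (by norm_num)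
    _ = κ' * (∫⁻ y, (‖f y‖₊ : ℝ≥0∞) ^ (2:ℝ) ∂(muR μ r)) ^ (1/2:ℝ) := by
        congr 1
        rw [← hsq κ', ← ENNReal.rpow_mul]
        norm_num
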